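/- Let A be an associative unital ring, M a nonzero abelian group, η : A → End_ℤ(M) a ring homomorphism making M a simple A-module, D_M the centralizer of range η in End_ℤ(M), and A_M ⊆ End_ℤ(M) the local function ring of A in M, with corestriction η_c : A → A_M. Let B be an associative unital ring with an injective ring homomorphism μ : B → End_ℤ(M) such that μ(t) is a unit in B whenever μ(t) lies in the centralizer of range μ and μ(t) ≠ 0 (B is a Local Function Ring on M), and assume that the centralizer of range μ in End_ℤ(M) equals D_M (the A-linear and the B-linear endomorphisms of M coincide). Then for every ring homomorphism κ : A → B with μ ∘ κ = η there exists a unique ring homomorphism ρ : A_M → B with ρ ∘ η_c = κ. (The functor L^A_M on Local Function Rings is represented by η_c : A → A_M.) -/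
import Mathlib


/-- `M` is a simple module over `A` via the structure map `η : A → End_ℤ(M)`: `M` is nonzero
and the only additive subgroups of `M` stable under `η a` for all `a ∈ A` are `0` and `M`. -/
def IsSimpleStructureMap {A M : Type*} [Ring A] [AddCommGroup M]
    (η : A →+* AddMonoid.End M) : Prop :=
  Nontrivial M ∧
    ∀ N : AddSubgroup M, (∀ a : A, ∀ x ∈ N, η a x ∈ N) → N = ⊥ ∨ N = ⊤

/-- `D_M`: the centralizer of the range of `η` in `End_ℤ(M)`, i.e. the ring of `A`-linear
endomorphisms of `M`. -/
def moduleCentralizer {A M : Type*} [Ring A] [AddCommGroup M]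
    (η : A →+* AddMonoid.End M) : Subring (AddMonoid.End M) :=
  Subring.centralizer (Set.range η)

/-- The local function ring `A_M ⊆ End_ℤ(M)`: the subring generated by the image of `η`
together with the (two-sided) inverses of all nonzero elements of `(range η) ∩ D_M`. -/
def localFunctionRing {A M : Type*} [Ring A] [AddCommGroup M]
    (η : A →+* AddMonoid.End M) : Subring (AddMonoid.End M) :=
  Subring.closure (Set.range η ∪
    {g : AddMonoid.End M | ∃ s : A, η s ∈ moduleCentralizer η ∧ η s ≠ 0 ∧
      g * η s = 1 ∧ η s * g = 1})

/-- The corestriction `η_c : A → A_M` of `η` to the local function ring. -/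
def localFunctionRingMap {A M : Type*} [Ring A] [AddCommGroup M]
    (η : A →+* AddMonoid.End M) : A →+* localFunctionRing η :=
  η.codRestrict (localFunctionRing η) fun a =>
    Subring.subset_closure (Set.mem_union_left _ ⟨a, rfl⟩)

/-- Let `η : A → End_ℤ(M)` make `M` a simple `A`-module, with local
function ring `A_M` and corestriction `η_c : A → A_M`.  Let `B` be a ring with an
injective ring homomorphism `μ : B → End_ℤ(M)` such that `μ t` is a unit of `B` whenever
`μ t` is a nonzero element of the centralizer of `range μ` (i.e. `B` is a Local Function
Ring on `M`), and assume the centralizer of `range μ` equals `D_M`.  Then for every ring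
homomorphism `κ : A → B` with `μ ∘ κ = η` there exists a unique ring homomorphism
`ρ : A_M → B` with `ρ ∘ η_c = κ`.  (The functor `L^A_M` on Local Function Rings is
represented by `η_c : A → A_M`.) -/
theorem localFunctionRing_represents_LFR_functor
    {A M : Type*} [Ring A] [AddCommGroup M]
    (η : A →+* AddMonoid.End M) (hM : IsSimpleStructureMap η)
    {B : Type*} [Ring B] (μ : B →+* AddMonoid.End M)
    (hμinj : Function.Injective μ)
    (hLFR : ∀ t : B, μ t ∈ Subring.centralizer (Set.range μ) → μ t ≠ 0 → IsUnit t)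
    (hcent : Subring.centralizer (Set.range μ) = moduleCentralizer η)
    (κ : A →+* B) (hκ : μ.comp κ = η) :
    ∃! ρ : localFunctionRing η →+* B, ρ.comp (localFunctionRingMap η) = κ := by
  have hκa : ∀ a : A, μ (κ a) = η a := fun a => DFunLike.congr_fun hκ a
  -- every generator is in the range of μ
  have hgen : (Set.range η ∪
      {g : AddMonoid.End M | ∃ s : A, η s ∈ moduleCentralizer η ∧ η s ≠ 0 ∧
        g * η s = 1 ∧ η s * g = 1}) ⊆ Set.range μ := by
    rintro x (⟨a, rfl⟩ | ⟨s, hsD, hs0, hg1, hg2⟩)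
    · exact ⟨κ a, hκa a⟩
    · have hunit : IsUnit (κ s) := by
        refine hLFR (κ s) ?_ ?_
        · rw [hcent]; rw [← hκa s] at hsD; exact hsD
        · rw [hκa s]; exact hs0
      obtain ⟨u, hu⟩ := hunit
      refine ⟨↑u⁻¹, ?_⟩
      have h1 : μ ↑u⁻¹ * η s = 1 := by
        rw [← hκa s, ← hu, ← map_mul, Units.inv_mul, map_one]
      calc μ ↑u⁻¹ = μ ↑u⁻¹ * (η s * x) := by rw [hg2, mul_one]
        _ = (μ ↑u⁻¹ * η s) * x := by rw [mul_assoc]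
        _ = x := by rw [h1, one_mul]
  have hle : localFunctionRing η ≤ μ.range := by
    rw [localFunctionRing, Subring.closure_le]
    exact hgen
  -- μ as ring equiv onto its range
  let e : B ≃+* μ.range := RingEquiv.ofBijective μ.rangeRestrict
    ⟨fun x y h => hμinj (congrArg Subtype.val h), μ.rangeRestrict_surjective⟩
  have he : ∀ b : B, (e b : AddMonoid.End M) = μ b := fun b => rfl
  have hesymm : ∀ y : μ.range, μ (e.symm y) = (y : AddMonoid.End M) := by
    intro y; rw [← he, e.apply_symm_apply]
  let ρ : localFunctionRing η →+* B :=
    e.symm.toRingHom.comp (Subring.inclusion hle)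
  have hρval : ∀ x : localFunctionRing η, μ (ρ x) = (x : AddMonoid.End M) := by
    intro x; exact hesymm _
  refine ⟨ρ, ?_, ?_⟩
  · ext a
    apply hμinj
    rw [RingHom.comp_apply, hρval, hκa]
    rfl
  · intro ρ' hρ'
    -- show μ (ρ' x) = x.val for all x, then conclude by injectivity
    have key : ∀ (x : AddMonoid.End M) (hx : x ∈ localFunctionRing η),
        μ (ρ' ⟨x, hx⟩) = x := by
      intro x hx
      induction hx using Subring.closure_induction with
      | mem y hy =>
        rcases hy with ⟨a, rfl⟩ | ⟨s, hsD, hs0, hg1, hg2⟩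
        · have : (⟨η a, _⟩ : localFunctionRing η) = localFunctionRingMap η a := rfl
          rw [this]
          have := DFunLike.congr_fun hρ' a
          rw [RingHom.comp_apply] at this
          rw [this, hκa]
        · have hmem : η s ∈ localFunctionRing η :=
            Subring.subset_closure (Set.mem_union_left _ ⟨s, rfl⟩)
          have hymem : y ∈ localFunctionRing η :=
            Subring.subset_closure (Set.mem_union_right _ ⟨s, hsD, hs0, hg1, hg2⟩)
          have h1 : (⟨y, hymem⟩ : localFunctionRing η) * ⟨η s, hmem⟩ = 1 :=
            Subtype.ext hg1
          have hρs : ρ' ⟨η s, hmem⟩ = κ s := by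
            have : (⟨η s, hmem⟩ : localFunctionRing η) = localFunctionRingMap η s := rfl
            rw [this]
            have := DFunLike.congr_fun hρ' s
            rw [RingHom.comp_apply] at this
            rw [this]
          have hb1 : μ (ρ' ⟨y, hymem⟩) * η s = 1 := by
            rw [← hκa s, ← hρs, ← map_mul, ← map_mul, h1, map_one, map_one]
          calc μ (ρ' ⟨y, hymem⟩) = μ (ρ' ⟨y, hymem⟩) * (η s * y) := by rw [hg2, mul_one]
            _ = (μ (ρ' ⟨y, hymem⟩) * η s) * y := by rw [mul_assoc]
            _ = y := by rw [hb1, one_mul]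
      | zero =>
        have : (⟨(0:AddMonoid.End M), _⟩ : localFunctionRing η) = 0 := rfl
        rw [this, ρ'.map_zero, μ.map_zero]
      | one =>
        have : (⟨(1:AddMonoid.End M), _⟩ : localFunctionRing η) = 1 := rfl
        rw [this, ρ'.map_one, μ.map_one]
      | add a b ha hb iha ihb =>
        have : (⟨a + b, _⟩ : localFunctionRing η) = ⟨a, ha⟩ + ⟨b, hb⟩ := rfl
        rw [this, ρ'.map_add, μ.map_add, iha, ihb]
      | neg a ha iha =>
        have : (⟨-a, _⟩ : localFunctionRing η) = -⟨a, ha⟩ := rfl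
        rw [this, ρ'.map_neg, μ.map_neg, iha]
      | mul a b ha hb iha ihb =>
        have : (⟨a * b, _⟩ : localFunctionRing η) = ⟨a, ha⟩ * ⟨b, hb⟩ := rfl
        rw [this, ρ'.map_mul, μ.map_mul, iha, ihb]
    ext x
    apply hμinj
    rw [key x x.2, hρval]
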